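/- Let A, B ∈ SL(2,ℝ) form a balanced pair (normal form as in the three cases (h), (m), (p)), and fix integers p, q ≥ 1. Then tr(A^p B^q A B) > tr(A^{p+1} B^{q+1}). -/

import Mathlib

open Matrix

/-- The hyperbolic matrix `H^λ_{s,u}`. -/
noncomputable def Hmat (l s u : ℝ) : Matrix (Fin 2) (Fin 2) ℝ :=
  !![s, u; 1, 1] * !![l, 0; 0, l⁻¹] * (!![s, u; 1, 1])⁻¹

/-- `(A,B)` is a balanced pair in normal form: case (h), (m) or (p). -/
def BalancedNormalForm (A B : Matrix (Fin 2) (Fin 2) ℝ) : Prop :=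
  (∃ l₁ l₂ s₁ s₂ u₁ u₂ : ℝ, 1 < l₁ ∧ 1 < l₂ ∧
      u₂ < u₁ ∧ u₁ < 0 ∧ 0 < s₁ ∧ s₁ < s₂ ∧
      A = Hmat l₁ s₁ u₁ ∧ B = Hmat l₂ s₂ u₂) ∨
  (∃ l s u x : ℝ, 1 < l ∧ u < 0 ∧ 0 < s ∧ 0 < x ∧
      A = Hmat l s u ∧ B = !![1, 0; x, 1]) ∨
  (∃ x y : ℝ, 0 < x ∧ 0 < y ∧ A = !![1, 0; x, 1] ∧ B = !![1, y; 0, 1])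

/-! ### Auxiliary material -/

/-- The "Chebyshev-like" coefficients `Γ` appearing in powers of an `SL₂` matrix. -/
def trGamma (t : ℝ) : ℕ → ℝ
  | 0 => 0
  | 1 => 1
  | (n+2) => t * trGamma t (n+1) - trGamma t n

lemma trGamma_aux (t : ℝ) (ht : 2 ≤ t) :
    ∀ n, 0 ≤ trGamma t n ∧ trGamma t n + 1 ≤ trGamma t (n+1)
  | 0 => by simp [trGamma]
  | (n+1) => by
    obtain ⟨h0, h1⟩ := trGamma_aux t ht n
    have h2 : trGamma t (n+2) = t * trGamma t (n+1) - trGamma t n := by simp [trGamma]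
    constructor
    · linarith
    · nlinarith

lemma one_le_trGamma (t : ℝ) (ht : 2 ≤ t) (n : ℕ) : 1 ≤ trGamma t (n+1) := by
  obtain ⟨h0, h1⟩ := trGamma_aux t ht n
  linarith

lemma pow_eq_trGamma (A : Matrix (Fin 2) (Fin 2) ℝ) (hA : A * A = A.trace • A - 1) :
    ∀ n, A ^ (n+1) = trGamma A.trace (n+1) • A - trGamma A.trace n • 1
  | 0 => by simp [trGamma]
  | (n+1) => by
    have ih := pow_eq_trGamma A hA n
    have h2 : trGamma A.trace (n+2) = A.trace * trGamma A.trace (n+1) - trGamma A.trace n := by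
      simp [trGamma]
    rw [pow_succ, ih, h2, sub_mul, smul_mul_assoc, smul_mul_assoc, one_mul, hA]
    module

/-- The abstract key inequality, for any `SL₂`-like pair with
`tr((AB)²) > tr(A²B²)` and traces at least `2`. -/
lemma key_ineq (A B : Matrix (Fin 2) (Fin 2) ℝ)
    (hA : A * A = A.trace • A - 1) (hB : B * B = B.trace • B - 1)
    (htA : 2 ≤ A.trace) (htB : 2 ≤ B.trace)
    (hD : (A * A * (B * B)).trace < (A * B * (A * B)).trace)
    (p q : ℕ) (hp : 1 ≤ p) (hq : 1 ≤ q) :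
    (A ^ p * B ^ q * A * B).trace > (A ^ (p + 1) * B ^ (q + 1)).trace := by
  obtain ⟨p', rfl⟩ : ∃ p', p = p' + 1 := ⟨p - 1, by omega⟩
  obtain ⟨q', rfl⟩ : ∃ q', q = q' + 1 := ⟨q - 1, by omega⟩
  set t := A.trace with hT
  set r := B.trace with hR
  have hAAB : (A * (A * B)).trace = t * (A * B).trace - r := by
    rw [← mul_assoc, hA, sub_mul, smul_mul_assoc, one_mul]
    simp [trace_sub, trace_smul]
    exact hR.symm
  have hBAB : (B * (A * B)).trace = r * (A * B).trace - t := by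
    rw [trace_mul_comm, mul_assoc, ← mul_assoc A B B, mul_assoc, hB, mul_sub,
      mul_smul_comm, mul_one]
    simp [trace_sub, trace_smul]
    exact hT.symm
  have hAABB : (A * (A * (B * B))).trace = t * r * (A * B).trace - t * t - r * r + 2 := by
    rw [← mul_assoc, hA, hB, sub_mul, mul_sub, mul_sub, smul_mul_assoc, one_mul,
      smul_mul_assoc, mul_smul_comm, mul_one, smul_smul]
    simp [trace_sub, trace_smul, trace_one]
    ring
  have hDelta : 0 < (A * (B * (A * B))).trace - (t * r * (A*B).trace - t*t - r*r + 2) := by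
    rw [← hAABB]
    simp only [mul_assoc] at hD
    linarith
  have hApow := pow_eq_trGamma A hA
  have hBpow := pow_eq_trGamma B hB
  set c0 := trGamma t p' with hc0
  set c1 := trGamma t (p'+1) with hc1
  set c2 := trGamma t (p'+2) with hc2
  set d0 := trGamma r q' with hd0
  set d1 := trGamma r (q'+1) with hd1
  set d2 := trGamma r (q'+2) with hd2
  have hc2' : c2 = t * c1 - c0 := by simp [hc2, hc1, hc0, trGamma]
  have hd2' : d2 = r * d1 - d0 := by simp [hd2, hd1, hd0, trGamma]
  have hlhs : (A ^ (p'+1) * B ^ (q'+1) * A * B).trace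
      = c1*d1*(A * (B * (A * B))).trace - c1*d0*(A * (A * B)).trace
        - c0*d1*(B * (A * B)).trace + c0*d0*(A * B).trace := by
    rw [hApow p', hBpow q']
    simp only [sub_mul, mul_sub, smul_mul_assoc, mul_smul_comm, one_mul, mul_one,
      smul_smul, trace_sub, trace_smul, mul_assoc, smul_sub, trace_add]
    simp only [smul_eq_mul, ← hT, ← hR, Nat.add_comm 1 p', Nat.add_comm 1 q']
    ring
  have hrhs : (A ^ (p'+1+1) * B ^ (q'+1+1)).trace
      = c2*d2*(A * B).trace - c2*d1*t - c1*d2*r + 2*(c1*d1) := by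
    rw [hApow (p'+1), hBpow (q'+1)]
    simp only [sub_mul, mul_sub, smul_mul_assoc, mul_smul_comm, one_mul, mul_one,
      smul_smul, trace_sub, trace_smul, trace_one, smul_sub]
    simp [← hT, ← hR]
    ring
  rw [hlhs, hrhs, hAAB, hBAB, hc2', hd2']
  have hc : 1 ≤ c1 := one_le_trGamma t htA p'
  have hd : 1 ≤ d1 := one_le_trGamma r htB q'
  have h1 : 1 ≤ c1 * d1 := by nlinarith
  set T := (A*B).trace
  set T2 := (A * (B * (A * B))).trace
  have hkey : c1*d1*T2 - c1*d0*(t*T - r) - c0*d1*(r*T - t) + c0*d0*T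
      - ((t*c1-c0)*(r*d1-d0)*T - (t*c1-c0)*d1*t - c1*(r*d1-d0)*r + 2*(c1*d1))
      = c1*d1*(T2 - (t*r*T - t*t - r*r + 2)) := by ring
  have h2 : T2 - (t*r*T - t*t - r*r + 2) ≤ c1*d1*(T2 - (t*r*T - t*t - r*r + 2)) :=
    le_mul_of_one_le_left (le_of_lt hDelta) h1
  linarith

/-- Explicit entries of `Hmat`. -/
lemma Hmat_eq (l s u : ℝ) :
    Hmat l s u = !![(s-u)⁻¹*(s*l - u*l⁻¹), (s-u)⁻¹*(s*u*(l⁻¹-l));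
                    (s-u)⁻¹*(l-l⁻¹), (s-u)⁻¹*(s*l⁻¹ - u*l)] := by
  have hdet : (!![s, u; 1, 1] : Matrix (Fin 2) (Fin 2) ℝ).det = s - u := by
    simp [Matrix.det_fin_two_of]
  have hinv : (!![s, u; 1, 1] : Matrix (Fin 2) (Fin 2) ℝ)⁻¹
      = (s - u)⁻¹ • !![1, -u; -1, s] := by
    rw [Matrix.inv_def, hdet, Matrix.adjugate_fin_two_of, Ring.inverse_eq_inv']
  unfold Hmat
  rw [hinv, Matrix.mul_smul, Matrix.mul_fin_two, Matrix.mul_fin_two]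
  ext i j
  fin_cases i <;> fin_cases j <;>
    simp only [Fin.zero_eta, Fin.mk_one, Matrix.smul_apply, smul_eq_mul,
      Matrix.cons_val_zero, Matrix.cons_val_one, Matrix.head_cons, Matrix.of_apply,
      Matrix.cons_val', Matrix.empty_val', Matrix.cons_val_fin_one,
      Matrix.head_fin_const] <;> ring

/-- Cayley–Hamilton for 2×2 determinant-one matrices, explicit entries. -/
lemma ch_fin_two (a b c d : ℝ) (h : a*d - b*c = 1) :
    !![a,b;c,d] * !![a,b;c,d] = (a+d) • (!![a,b;c,d] : Matrix (Fin 2) (Fin 2) ℝ) - 1 := by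
  rw [Matrix.mul_fin_two, Matrix.one_fin_two]
  ext i j
  fin_cases i <;> fin_cases j <;>
      simp only [Fin.zero_eta, Fin.mk_one, Matrix.smul_apply, Matrix.sub_apply, smul_eq_mul,
        Matrix.cons_val_zero, Matrix.cons_val_one, Matrix.head_cons, Matrix.of_apply,
        Matrix.cons_val', Matrix.empty_val', Matrix.cons_val_fin_one, Matrix.head_fin_const] <;>
    (first | ring1 | linear_combination h | linear_combination -h)

lemma ch_of_det (a b c d : ℝ) (h : a*d - b*c = 1) :
    !![a,b;c,d] * !![a,b;c,d]
      = (!![a,b;c,d] : Matrix (Fin 2) (Fin 2) ℝ).trace • !![a,b;c,d] - 1 := by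
  rw [Matrix.trace_fin_two_of]
  exact ch_fin_two a b c d h

lemma Hmat_trace (l s u : ℝ) (hsu : u < s) : (Hmat l s u).trace = l + l⁻¹ := by
  have h : s - u ≠ 0 := by linarith
  rw [Hmat_eq, Matrix.trace_fin_two_of]
  field_simp
  ring

/-- The trace difference `tr((AB)²) - tr(A²B²)` in explicit entries. -/
lemma delta_eq (a b c d e f g h : ℝ) :
    (!![a,b;c,d] * !![e,f;g,h] * (!![a,b;c,d] * !![e,f;g,h])).trace
      - (!![a,b;c,d] * !![a,b;c,d] * (!![e,f;g,h] * !![e,f;g,h])).trace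
    = (b*g - c*f)^2 + (f*(a-d) - b*(e-h)) * (c*(e-h) - g*(a-d)) := by
  simp [Matrix.mul_fin_two, Matrix.trace_fin_two_of]
  ring

lemma two_le_l_add_inv (l : ℝ) (hl : 1 < l) : 2 ≤ l + l⁻¹ := by
  have hl0 : 0 < l := by linarith
  rw [← sub_nonneg]
  have h : l + l⁻¹ - 2 = (l - 1)^2 / l := by field_simp; ring
  rw [h]
  positivity

set_option maxHeartbeats 1000000 in
theorem trace_ApBqAB_gt (A B : Matrix (Fin 2) (Fin 2) ℝ)
    (h : BalancedNormalForm A B)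
    (p q : ℕ) (hp : 1 ≤ p) (hq : 1 ≤ q) :
    (A ^ p * B ^ q * A * B).trace > (A ^ (p + 1) * B ^ (q + 1)).trace := by
  rcases h with ⟨l₁, l₂, s₁, s₂, u₁, u₂, hl₁, hl₂, hu, hu1, hs1, hs, hA, hB⟩ |
    ⟨l, s, u, x, hl, hu, hs, hx, hA, hB⟩ | ⟨x, y, hx, hy, hA, hB⟩
  · -- case (h)
    subst hA hB
    have hl₁0 : (0:ℝ) < l₁ := by linarith
    have hl₂0 : (0:ℝ) < l₂ := by linarith
    have hsu₁ : u₁ < s₁ := by linarith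
    have hsu₂ : u₂ < s₂ := by linarith
    have hD₁ : s₁ - u₁ ≠ 0 := by linarith
    have hD₂ : s₂ - u₂ ≠ 0 := by linarith
    have hdetA : ((s₁-u₁)⁻¹*(s₁*l₁ - u₁*l₁⁻¹)) * ((s₁-u₁)⁻¹*(s₁*l₁⁻¹ - u₁*l₁))
        - ((s₁-u₁)⁻¹*(s₁*u₁*(l₁⁻¹-l₁))) * ((s₁-u₁)⁻¹*(l₁-l₁⁻¹)) = 1 := by
      field_simp
      ring
    have hdetB : ((s₂-u₂)⁻¹*(s₂*l₂ - u₂*l₂⁻¹)) * ((s₂-u₂)⁻¹*(s₂*l₂⁻¹ - u₂*l₂))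
        - ((s₂-u₂)⁻¹*(s₂*u₂*(l₂⁻¹-l₂))) * ((s₂-u₂)⁻¹*(l₂-l₂⁻¹)) = 1 := by
      field_simp
      ring
    refine key_ineq _ _ ?_ ?_ ?_ ?_ ?_ p q hp hq
    · rw [Hmat_eq]; exact ch_of_det _ _ _ _ hdetA
    · rw [Hmat_eq]; exact ch_of_det _ _ _ _ hdetB
    · rw [Hmat_trace _ _ _ hsu₁]; exact two_le_l_add_inv _ hl₁
    · rw [Hmat_trace _ _ _ hsu₂]; exact two_le_l_add_inv _ hl₂
    · rw [Hmat_eq l₁ s₁ u₁, Hmat_eq l₂ s₂ u₂, ← sub_pos]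
      rw [delta_eq]
      have hfact : ((s₁-u₁)⁻¹*(s₁*u₁*(l₁⁻¹-l₁))*((s₂-u₂)⁻¹*(l₂-l₂⁻¹))
            - (s₁-u₁)⁻¹*(l₁-l₁⁻¹)*((s₂-u₂)⁻¹*(s₂*u₂*(l₂⁻¹-l₂))))^2
          + ((s₂-u₂)⁻¹*(s₂*u₂*(l₂⁻¹-l₂))*((s₁-u₁)⁻¹*(s₁*l₁ - u₁*l₁⁻¹) - (s₁-u₁)⁻¹*(s₁*l₁⁻¹ - u₁*l₁))
              - (s₁-u₁)⁻¹*(s₁*u₁*(l₁⁻¹-l₁))*((s₂-u₂)⁻¹*(s₂*l₂ - u₂*l₂⁻¹) - (s₂-u₂)⁻¹*(s₂*l₂⁻¹ - u₂*l₂)))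
            * ((s₁-u₁)⁻¹*(l₁-l₁⁻¹)*((s₂-u₂)⁻¹*(s₂*l₂ - u₂*l₂⁻¹) - (s₂-u₂)⁻¹*(s₂*l₂⁻¹ - u₂*l₂))
              - (s₂-u₂)⁻¹*(l₂-l₂⁻¹)*((s₁-u₁)⁻¹*(s₁*l₁ - u₁*l₁⁻¹) - (s₁-u₁)⁻¹*(s₁*l₁⁻¹ - u₁*l₁)))
          = ((l₁-l₁⁻¹)*(l₂-l₂⁻¹)*(s₁-u₁)⁻¹*(s₂-u₂)⁻¹)^2
            * ((s₂-s₁)*(s₁-u₂)*(s₂-u₁)*(u₁-u₂)) := by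
        ring
      rw [hfact]
      have hk₁ : 0 < l₁ - l₁⁻¹ := by
        have : l₁⁻¹ < 1 := by rw [inv_lt_one_iff₀]; right; exact hl₁
        linarith
      have hk₂ : 0 < l₂ - l₂⁻¹ := by
        have : l₂⁻¹ < 1 := by rw [inv_lt_one_iff₀]; right; exact hl₂
        linarith
      have h1 : (0:ℝ) < (s₁-u₁)⁻¹ := by rw [inv_pos]; linarith
      have h2 : (0:ℝ) < (s₂-u₂)⁻¹ := by rw [inv_pos]; linarith
      have hK : 0 < (l₁-l₁⁻¹)*(l₂-l₂⁻¹)*(s₁-u₁)⁻¹*(s₂-u₂)⁻¹ := by positivity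
      have hE : 0 < (s₂-s₁)*(s₁-u₂)*(s₂-u₁)*(u₁-u₂) := by
        have a1 : (0:ℝ) < s₂ - s₁ := by linarith
        have a2 : (0:ℝ) < s₁ - u₂ := by linarith
        have a3 : (0:ℝ) < s₂ - u₁ := by linarith
        have a4 : (0:ℝ) < u₁ - u₂ := by linarith
        exact mul_pos (mul_pos (mul_pos a1 a2) a3) a4
      exact mul_pos (pow_pos hK 2) hE
  · -- case (m)
    subst hA hB
    have hl0 : (0:ℝ) < l := by linarith
    have hsu : u < s := by linarith
    have hD : s - u ≠ 0 := by linarith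
    have hdetA : ((s-u)⁻¹*(s*l - u*l⁻¹)) * ((s-u)⁻¹*(s*l⁻¹ - u*l))
        - ((s-u)⁻¹*(s*u*(l⁻¹-l))) * ((s-u)⁻¹*(l-l⁻¹)) = 1 := by
      field_simp
      ring
    refine key_ineq _ _ ?_ ?_ ?_ ?_ ?_ p q hp hq
    · rw [Hmat_eq]; exact ch_of_det _ _ _ _ hdetA
    · have : (1:ℝ)*1 - 0*x = 1 := by ring
      have h2 := ch_of_det 1 0 x 1 this
      simpa using h2
    · rw [Hmat_trace _ _ _ hsu]; exact two_le_l_add_inv _ hl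
    · norm_num [Matrix.trace_fin_two_of]
    · rw [Hmat_eq, ← sub_pos, delta_eq]
      have hb : 0 < (s-u)⁻¹*(s*u*(l⁻¹-l)) := by
        have h1 : (0:ℝ) < (s-u)⁻¹ := by rw [inv_pos]; linarith
        have h2 : s*u < 0 := mul_neg_of_pos_of_neg hs hu
        have h3 : l⁻¹ - l < 0 := by
          have : l⁻¹ < 1 := by rw [inv_lt_one_iff₀]; right; exact hl
          linarith
        exact mul_pos h1 (mul_pos_of_neg_of_neg h2 h3)
      have heq : ((s-u)⁻¹*(s*u*(l⁻¹-l))*x - (s-u)⁻¹*(l-l⁻¹)*0)^2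
          + (0*((s-u)⁻¹*(s*l - u*l⁻¹) - (s-u)⁻¹*(s*l⁻¹ - u*l)) - (s-u)⁻¹*(s*u*(l⁻¹-l))*(1-1))
            * ((s-u)⁻¹*(l-l⁻¹)*(1-1) - x*((s-u)⁻¹*(s*l - u*l⁻¹) - (s-u)⁻¹*(s*l⁻¹ - u*l)))
          = ((s-u)⁻¹*(s*u*(l⁻¹-l))*x)^2 := by ring
      rw [heq]
      exact pow_pos (mul_pos hb hx) 2
  · -- case (p)
    subst hA hB
    refine key_ineq _ _ ?_ ?_ ?_ ?_ ?_ p q hp hq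
    · have : (1:ℝ)*1 - 0*x = 1 := by ring
      simpa using ch_of_det 1 0 x 1 this
    · have : (1:ℝ)*1 - y*0 = 1 := by ring
      simpa using ch_of_det 1 y 0 1 this
    · norm_num [Matrix.trace_fin_two_of]
    · norm_num [Matrix.trace_fin_two_of]
    · rw [← sub_pos, delta_eq]
      have heq : (0*0 - x*y)^2 + (y*(1-1) - 0*(1-1)) * (x*(1-1) - 0*(1-1)) = (x*y)^2 := by ring
      rw [heq]
      exact pow_pos (mul_pos hx hy) 2
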